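/- Assume v2(m) > v2(u) + 1 and v2(m) > v2(v) + 1. Then the number of pairs (a,b) ∈ F_{p^m} × F_{p^m} with (a,b) ≠ (0,0) such that at least one of the two equations x^{p^{2k}} + x = -a^{p^k} and y^{p^{2ℓ}} + y = -b^{p^ℓ} has no solution in F_{p^m} equals p^{2m} - p^{2(m-u-v)}. -/

import Mathlib

open Polynomial


lemma gcd_pow_sub_one (p : ℕ) (hp : 2 ≤ p) (a b : ℕ) :
    Nat.gcd (p ^ a - 1) (p ^ b - 1) = p ^ Nat.gcd a b - 1 := by
  induction a using Nat.strong_induction_on generalizing b with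
  | _ a ih =>
    rcases Nat.eq_zero_or_pos a with rfl | ha
    · simp
    · have hmod : (p ^ b - 1) % (p ^ a - 1) = p ^ (b % a) - 1 := by
        obtain ⟨c, hc⟩ : p ^ a - 1 ∣ (p ^ a) ^ (b / a) - 1 := by
          simpa using Nat.sub_dvd_pow_sub_pow (p ^ a) 1 (b / a)
        have h1 : 1 ≤ p ^ (b % a) := Nat.one_le_pow _ _ (by omega)
        have h2 : 1 ≤ (p ^ a) ^ (b / a) := Nat.one_le_pow _ _ (by positivity)
        have hc' : (p ^ a) ^ (b / a) = (p ^ a - 1) * c + 1 := by omega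
        have hb : p ^ b = (p ^ a - 1) * (c * p ^ (b % a)) + p ^ (b % a) := by
          calc p ^ b = (p ^ a) ^ (b / a) * p ^ (b % a) := by
                rw [← pow_mul, ← pow_add, Nat.div_add_mod]
            _ = ((p ^ a - 1) * c + 1) * p ^ (b % a) := by rw [hc']
            _ = (p ^ a - 1) * (c * p ^ (b % a)) + p ^ (b % a) := by ring
        have key : p ^ b - 1 = (p ^ a - 1) * (c * p ^ (b % a)) + (p ^ (b % a) - 1) := by
          omega
        have hlt : p ^ (b % a) - 1 < p ^ a - 1 := by
          have := Nat.pow_lt_pow_right hp (Nat.mod_lt b ha)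
          omega
        rw [key, Nat.mul_add_mod, Nat.mod_eq_of_lt hlt]
      rw [Nat.gcd_rec (p ^ a - 1) (p ^ b - 1), hmod,
        ih (b % a) (Nat.mod_lt b ha) a, ← Nat.gcd_rec]

lemma key_nt (m k : ℕ) (hm : 0 < m)
    (h : padicValNat 2 (Nat.gcd m k) + 1 < padicValNat 2 m) :
    Nat.gcd (2 * k) m = 2 * Nat.gcd m k ∧ ∃ t, m = Nat.gcd (2 * k) m * (2 * t) := by
  have hk : k ≠ 0 := by
    rintro rfl
    simp [Nat.gcd_zero_right] at h
  have hm0 : m ≠ 0 := hm.ne'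
  have hval : padicValNat 2 (Nat.gcd m k) = min (padicValNat 2 m) (padicValNat 2 k) := by
    have := Nat.factorization_gcd hm0 hk
    have h2 : Nat.Prime 2 := Nat.prime_two
    have := congrArg (fun f => f 2) this
    simpa [Nat.factorization_def _ h2] using this
  have hkm : padicValNat 2 k + 1 < padicValNat 2 m := by omega
  set a := padicValNat 2 k with ha
  -- k = 2^a * k₁ with k₁ odd
  obtain ⟨k₁, hk₁⟩ : 2 ^ a ∣ k := pow_padicValNat_dvd
  have hk₁odd : ¬ 2 ∣ k₁ := by
    intro ⟨c, hc⟩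
    have : 2 ^ (a + 1) ∣ k := ⟨c, by rw [hk₁, hc]; ring⟩
    have : a + 1 ≤ padicValNat 2 k := (padicValNat_dvd_iff_le (hp := ⟨Nat.prime_two⟩) hk).mp this
    omega
  -- 2^(a+2) ∣ m
  have hdvdm : 2 ^ (a + 2) ∣ m := by
    have h1 : 2 ^ (padicValNat 2 m) ∣ m := pow_padicValNat_dvd
    exact dvd_trans (pow_dvd_pow 2 (by omega)) h1
  obtain ⟨m₂, hm₂⟩ := hdvdm
  -- m = 2^(a+1) * m₁ with m₁ = 2 * m₂ even
  have hm₁ : m = 2 ^ (a + 1) * (2 * m₂) := by rw [hm₂]; ring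
  have hcop : Nat.Coprime k₁ 2 := by
    rw [Nat.coprime_comm]
    rw [Nat.prime_two.coprime_iff_not_dvd]
    exact hk₁odd
  have e1 : Nat.gcd (2 * k) m = 2 ^ (a + 1) * Nat.gcd k₁ (2 * m₂) := by
    rw [hk₁, hm₁]
    rw [show 2 * (2 ^ a * k₁) = 2 ^ (a + 1) * k₁ by ring, Nat.gcd_mul_left]
  have e2 : Nat.gcd m k = 2 ^ a * Nat.gcd k₁ (2 * m₂) := by
    rw [Nat.gcd_comm, hk₁, hm₁]
    rw [show 2 ^ (a + 1) * (2 * m₂) = 2 ^ a * (2 * (2 * m₂)) by ring, Nat.gcd_mul_left]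
    congr 1
    exact Nat.Coprime.gcd_mul_left_cancel_right (2 * m₂) (Nat.coprime_comm.mp hcop) -- gcd k₁ (2 * (2*m₂)) = gcd k₁ (2*m₂)?
  constructor
  · rw [e1, e2]; ring
  · -- m / gcd(2k,m) = (2*m₂) / g₁ even
    set g₁ := Nat.gcd k₁ (2 * m₂) with hg₁
    have hg₁dvd : g₁ ∣ 2 * m₂ := Nat.gcd_dvd_right _ _
    obtain ⟨c, hc⟩ := hg₁dvd
    have hg₁odd : ¬ 2 ∣ g₁ := fun hd => hk₁odd (dvd_trans hd (Nat.gcd_dvd_left _ _))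
    have hceven : 2 ∣ c := by
      have h2 : (2:ℕ) ∣ g₁ * c := ⟨m₂, by omega⟩
      exact (Nat.Coprime.dvd_of_dvd_mul_left (Nat.coprime_comm.mp (Nat.Coprime.coprime_dvd_left (Nat.gcd_dvd_left k₁ (2*m₂)) hcop)) h2)
    obtain ⟨t, ht⟩ := hceven
    exact ⟨t, by rw [e1, hm₁, hc, ht]; ring⟩

lemma card_pow_eq_one_units (F : Type) [Field F] [Fintype F] (n : ℕ) (hn : 0 < n) :
    Set.ncard {x : Fˣ | x ^ n = 1} = Nat.gcd n (Nat.card Fˣ) := by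
  classical
  set N := Nat.card Fˣ with hN
  set g := Nat.gcd n N with hg
  have hN0 : 0 < N := Nat.card_pos
  have hg0 : 0 < g := Nat.gcd_pos_of_pos_left _ hn
  have hgN : g ∣ N := Nat.gcd_dvd_right _ _
  have hNcard : N = Fintype.card Fˣ := Nat.card_eq_fintype_card
  have hsets : {x : Fˣ | x ^ n = 1} = {x : Fˣ | x ^ g = 1} := by
    ext x
    simp only [Set.mem_setOf_eq]
    constructor
    · intro hx
      have hxN : x ^ N = 1 := by rw [hNcard]; exact pow_card_eq_one
      have hbez : (g : ℤ) = n * Nat.gcdA n N + N * Nat.gcdB n N := Nat.gcd_eq_gcd_ab n N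
      have : x ^ (g : ℤ) = 1 := by
        rw [hbez, zpow_add, zpow_mul, zpow_mul, zpow_natCast, zpow_natCast, hx, hxN,
          one_zpow, one_zpow, one_mul]
      simpa [zpow_natCast] using this
    · intro hx
      have : x ^ n = (x ^ g) ^ (n / g) := by
        rw [← pow_mul, Nat.mul_div_cancel' (Nat.gcd_dvd_left n N)]
      rw [this, hx, one_pow]
  rw [hsets]
  apply le_antisymm
  · -- at most g
    have hfin : {x : Fˣ | x ^ g = 1} = ↑(Finset.univ.filter (fun x : Fˣ => x ^ g = 1)) := by
      ext x; simp
    rw [hfin, Set.ncard_coe_finset]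
    calc (Finset.univ.filter (fun x : Fˣ => x ^ g = 1)).card
        ≤ Multiset.card (nthRoots g ((Units.coeHom F) 1)) :=
          card_nthRoots_subgroup_units (Units.coeHom F) (fun _ _ h => Units.ext h) hg0 1
      _ ≤ g := by simpa using Polynomial.card_nthRoots g (1 : F)
  · -- at least g
    obtain ⟨ζ, hζ⟩ := IsCyclic.exists_generator (α := Fˣ)
    have horder : orderOf ζ = N := orderOf_eq_card_of_forall_mem_zpowers hζ
    set ξ := ζ ^ (N / g) with hξ
    have hordξ : orderOf ξ = g := by
      rw [hξ, orderOf_pow, horder, Nat.gcd_eq_right (Nat.div_dvd_of_dvd hgN),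
        Nat.div_div_self hgN hN0.ne']
    have hξg : ξ ^ g = 1 := by rw [← hordξ]; exact pow_orderOf_eq_one ξ
    have hsub : (Subgroup.zpowers ξ : Set Fˣ) ⊆ {x : Fˣ | x ^ g = 1} := by
      rintro x hx
      obtain ⟨j, rfl⟩ := Subgroup.mem_zpowers_iff.mp hx
      simp only [Set.mem_setOf_eq]
      rw [← zpow_natCast (ξ ^ j) g, ← zpow_mul, mul_comm, zpow_mul, zpow_natCast, hξg, one_zpow]
    have hcard : (Subgroup.zpowers ξ : Set Fˣ).ncard = g := by
      rw [← Nat.card_coe_set_eq, SetLike.coe_sort_coe, Nat.card_zpowers, hordξ]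
    calc g = (Subgroup.zpowers ξ : Set Fˣ).ncard := hcard.symm
      _ ≤ _ := Set.ncard_le_ncard hsub (Set.toFinite _)

section aux

lemma fiber_card_aux (F : Type) [Field F] [Fintype F] (n : ℕ) (c x₀ : Fˣ) (h0 : x₀ ^ n = c) :
    Set.ncard {x : Fˣ | x ^ n = c} = Set.ncard {x : Fˣ | x ^ n = 1} := by
  have himg : (fun x : Fˣ => x₀ * x) '' {x : Fˣ | x ^ n = 1} = {x : Fˣ | x ^ n = c} := by
    ext y
    simp only [Set.mem_image, Set.mem_setOf_eq]
    constructor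
    · rintro ⟨x, hx, rfl⟩
      rw [mul_pow, h0, hx, mul_one]
    · intro hy
      refine ⟨x₀⁻¹ * y, ?_, by group⟩
      rw [mul_pow, inv_pow, hy, ← h0, inv_mul_cancel]
  rw [← himg, Set.ncard_image_of_injective _ (mul_right_injective x₀)]

end aux

lemma count_coord (p m k : ℕ) (hp : p.Prime) (hodd : Odd p) (hm : 0 < m)
    (F : Type) [Field F] [Fintype F] (hcard : Fintype.card F = p ^ m)
    (h2 : padicValNat 2 (Nat.gcd m k) + 1 < padicValNat 2 m) :
    2 * Nat.gcd m k ≤ m ∧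
    Set.ncard {a : F | ∃ x : F, x ^ p ^ (2 * k) + x = -(a ^ p ^ k)} =
      p ^ (m - 2 * Nat.gcd m k) := by
  classical
  haveI : Fact p.Prime := ⟨hp⟩
  have hp2 : 2 ≤ p := hp.two_le
  have hk0 : k ≠ 0 := by rintro rfl; simp [Nat.gcd_zero_right] at h2
  obtain ⟨hgcd2, t, hmt⟩ := key_nt m k hm h2
  set u := Nat.gcd m k with hu
  rw [hgcd2] at hmt
  have ht0 : 0 < t := by rcases Nat.eq_zero_or_pos t with rfl | h; · simp at hmt; omega
                         · exact h
  have hdm : 2 * u ≤ m := by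
    calc 2 * u ≤ 2 * u * (2 * t) := Nat.le_mul_of_pos_right _ (by omega)
      _ = m := hmt.symm
  refine ⟨hdm, ?_⟩
  -- characteristic
  obtain ⟨q, hqc⟩ := CharP.exists F
  haveI := hqc
  obtain ⟨nn, hqp, hcard'⟩ := FiniteField.card F q
  have hpq : p = q := by
    have h1 : p ∣ q ^ (nn : ℕ) := by
      rw [← hcard', hcard]
      exact dvd_pow_self p hm.ne'
    exact (Nat.prime_dvd_prime_iff_eq hp hqp).mp (hp.dvd_of_dvd_pow h1)
  subst hpq
  -- the additive map
  have hq0 : p ^ (2 * k) ≠ 0 := by positivity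
  have hq1 : 1 ≤ p ^ (2 * k) := Nat.one_le_pow _ _ hp.pos
  set n := p ^ (2 * k) - 1 with hn
  have hqn : p ^ (2 * k) = n + 1 := by omega
  have hn0 : 0 < n := by
    have : p ^ 1 < p ^ (2 * k) := Nat.pow_lt_pow_right hp.one_lt (by omega)
    simp at this; omega
  let L : F →+ F :=
    { toFun := fun x => x ^ p ^ (2 * k) + x
      map_zero' := by simp [zero_pow hq0]
      map_add' := fun x y => by
        show (x + y) ^ p ^ (2 * k) + (x + y) = (x ^ p ^ (2 * k) + x) + (y ^ p ^ (2 * k) + y)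
        rw [add_pow_char_pow]; ring }
  have hLdef : ∀ x : F, L x = x ^ p ^ (2 * k) + x := fun x => rfl
  -- card of units
  have hNF : Nat.card Fˣ = p ^ m - 1 := by
    rw [Nat.card_eq_fintype_card, Fintype.card_units, hcard]
  have hpm1 : 1 ≤ p ^ m := Nat.one_le_pow _ _ hp.pos
  have hpm2 : 2 ≤ p ^ m := by
    have : p ^ 1 ≤ p ^ m := Nat.pow_le_pow_right hp.pos hm
    simp at this; omega
  -- gcd value
  have hgcdval : Nat.gcd n (p ^ m - 1) = p ^ (2 * u) - 1 := by
    rw [hn, gcd_pow_sub_one p hp2, hgcd2]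
  have hpu1 : 1 ≤ p ^ (2 * u) := Nat.one_le_pow _ _ hp.pos
  -- divisibility : p^m - 1 = (p^(2u) - 1) * (2 * s)
  obtain ⟨s, hNs⟩ : ∃ s, p ^ m - 1 = (p ^ (2 * u) - 1) * (2 * s) := by
    obtain ⟨c, hc⟩ : (p ^ (2 * u)) ^ 2 - 1 ∣ p ^ m - 1 := by
      have h' := Nat.sub_dvd_pow_sub_pow ((p ^ (2 * u)) ^ 2) 1 t
      rw [one_pow] at h'
      have hpm : p ^ m = ((p ^ (2 * u)) ^ 2) ^ t := by
        rw [← pow_mul, ← pow_mul, hmt]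
      rw [hpm]
      exact h'
    obtain ⟨w, hw⟩ : ∃ w, p ^ (2 * u) + 1 = 2 * w := by
      have : Odd (p ^ (2 * u)) := hodd.pow
      obtain ⟨r, hr⟩ := this
      exact ⟨r + 1, by omega⟩
    have hsq : (p ^ (2 * u)) ^ 2 - 1 = (p ^ (2 * u) + 1) * (p ^ (2 * u) - 1) := by
      simpa using Nat.sq_sub_sq (p ^ (2 * u)) 1
    exact ⟨w * c, by rw [hc, hsq, hw]; ring⟩
  -- existence of x₀ with x₀ ^ n = -1
  obtain ⟨x₀, hx₀⟩ : ∃ x₀ : Fˣ, x₀ ^ n = -1 := by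
    obtain ⟨ζ, hζ⟩ := IsCyclic.exists_generator (α := Fˣ)
    have horder : orderOf ζ = p ^ m - 1 := by
      rw [orderOf_eq_card_of_forall_mem_zpowers hζ, hNF]
    set N := p ^ m - 1 with hNdef
    set g := p ^ (2 * u) - 1 with hgdef
    set W := g * s with hWdef
    have hN2W : N = 2 * W := by rw [hNs, hWdef]; ring
    have hN0 : 0 < N := by omega
    have hW0 : 0 < W := by omega
    have hζW : ζ ^ W = -1 := by
      have hsq : (ζ ^ W) ^ 2 = 1 := by
        rw [← pow_mul, mul_comm W 2, ← hN2W, ← horder, pow_orderOf_eq_one]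
      have hne : ζ ^ W ≠ 1 := by
        intro h
        have hdvd := orderOf_dvd_of_pow_eq_one h
        rw [horder] at hdvd
        have := Nat.le_of_dvd hW0 hdvd
        omega
      set y := ((ζ ^ W : Fˣ) : F) with hy
      have hy2 : y ^ 2 = 1 := by
        rw [hy, ← Units.val_pow_eq_pow_val, hsq, Units.val_one]
      have hyne : y ≠ 1 := by
        intro h
        exact hne (Units.ext (by simpa [hy] using h))
      have hfac : (y - 1) * (y + 1) = 0 := by linear_combination hy2
      rcases mul_eq_zero.mp hfac with h | h
      · exact absurd (sub_eq_zero.mp h) hyne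
      · have hyeq : y = -1 := eq_neg_of_add_eq_zero_left h
        exact Units.ext (by simpa [hy] using hyeq)
    -- Bezout
    have hbez : (Nat.gcd n N : ℤ) = n * Nat.gcdA n N + N * Nat.gcdB n N := Nat.gcd_eq_gcd_ab n N
    rw [hgcdval] at hbez
    set α := Nat.gcdA n N
    set β := Nat.gcdB n N
    refine ⟨ζ ^ (α * s), ?_⟩
    have hζN : ζ ^ (N : ℤ) = 1 := by
      rw [zpow_natCast, ← horder, pow_orderOf_eq_one]
    have hexp : (α * s) * (n : ℤ) = (W : ℤ) + (N : ℤ) * (-(β * s)) := by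
      have hWcast : (W : ℤ) = (g : ℤ) * (s : ℤ) := by exact_mod_cast rfl
      rw [hWcast]
      have hgcast : (g : ℤ) = (n : ℤ) * α + (N : ℤ) * β := by exact_mod_cast hbez
      rw [hgcast]; ring
    calc (ζ ^ (α * (s:ℤ))) ^ n = ζ ^ ((α * s) * (n : ℤ)) := by
          rw [← zpow_natCast (ζ ^ (α * (s:ℤ))) n, ← zpow_mul]
      _ = ζ ^ (W : ℤ) * (ζ ^ (N : ℤ)) ^ (-(β * (s:ℤ))) := by
          rw [hexp, zpow_add, zpow_mul]
      _ = -1 := by rw [hζN, one_zpow, mul_one, zpow_natCast, hζW]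
  -- kernel description
  have hkerset : (L.ker : Set F) =
      insert (0 : F) ((fun x : Fˣ => (x : F)) '' {x : Fˣ | x ^ n = -1}) := by
    ext y
    simp only [SetLike.mem_coe, AddMonoidHom.mem_ker, Set.mem_insert_iff, Set.mem_image,
      Set.mem_setOf_eq, hLdef]
    constructor
    · intro hy
      by_cases h0 : y = 0
      · exact Or.inl h0
      · refine Or.inr ⟨Units.mk0 y h0, ?_, rfl⟩
        have hyq : y ^ p ^ (2 * k) = -y := eq_neg_of_add_eq_zero_left hy
        have hyn : y ^ n * y = -1 * y := by
          rw [← pow_succ, ← hqn, hyq]; ring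
        have : y ^ n = -1 := mul_right_cancel₀ h0 hyn
        ext
        simpa [Units.val_pow_eq_pow_val] using this
    · rintro (rfl | ⟨x, hx, rfl⟩)
      · simp [zero_pow hq0]
      · have hxn : ((x : F)) ^ n = -1 := by
          have := congrArg (Units.val) hx
          simpa [Units.val_pow_eq_pow_val] using this
        rw [hqn, pow_succ, hxn]
        ring
  -- kernel cardinality
  have hkercard : Nat.card L.ker = p ^ (2 * u) := by
    have h0img : (0 : F) ∉ (fun x : Fˣ => (x : F)) '' {x : Fˣ | x ^ n = -1} := by
      rintro ⟨x, -, hx⟩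
      exact x.ne_zero hx
    have : Nat.card L.ker = ((L.ker : Set F)).ncard := by
      rw [← Nat.card_coe_set_eq]
      rfl
    rw [this, hkerset, Set.ncard_insert_of_notMem h0img (Set.toFinite _),
      Set.ncard_image_of_injective _ (fun _ _ h => Units.ext h),
      fiber_card_aux F n (-1) x₀ hx₀, card_pow_eq_one_units F n hn0, hNF, hgcdval]
    omega
  -- range cardinality
  have hrangecard : Nat.card L.range = p ^ (m - 2 * u) := by
    have h1 : Nat.card F = Nat.card (F ⧸ L.ker) * Nat.card L.ker :=
      AddSubgroup.card_eq_card_quotient_mul_card_addSubgroup _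
    have h2' : Nat.card (F ⧸ L.ker) = Nat.card L.range :=
      Nat.card_congr (QuotientAddGroup.quotientKerEquivRange L).toEquiv
    rw [h2', hkercard] at h1
    have h3 : Nat.card F = p ^ m := by rw [Nat.card_eq_fintype_card, hcard]
    rw [h3] at h1
    have h4 : p ^ m = p ^ (m - 2 * u) * p ^ (2 * u) := by
      rw [← pow_add]
      congr 1
      omega
    rw [h4] at h1
    exact (Nat.eq_of_mul_eq_mul_right (by positivity) h1.symm)
  -- the set A is a preimage
  set Φ : F → F := fun a => -(a ^ p ^ k) with hΦ
  have hΦinj : Function.Injective Φ := by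
    have hfrob : Function.Injective (fun a : F => a ^ p ^ k) := by
      have := (iterateFrobenius F p k).injective
      exact fun a b h => this (by simpa [iterateFrobenius_def] using h)
    exact neg_injective.comp hfrob
  have hΦsurj : Function.Surjective Φ := Finite.surjective_of_injective hΦinj
  have hAset : {a : F | ∃ x : F, x ^ p ^ (2 * k) + x = -(a ^ p ^ k)} =
      Φ ⁻¹' (L.range : Set F) := by
    ext a
    simp only [Set.mem_setOf_eq, Set.mem_preimage, SetLike.mem_coe, AddMonoidHom.mem_range, hLdef, hΦ]
  rw [hAset]
  have himgpre : Φ '' (Φ ⁻¹' (L.range : Set F)) = (L.range : Set F) :=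
    Set.image_preimage_eq _ hΦsurj
  have : (Φ ⁻¹' (L.range : Set F)).ncard = ((L.range : Set F)).ncard := by
    conv_rhs => rw [← himgpre]
    rw [Set.ncard_image_of_injective _ hΦinj]
  rw [this, ← Nat.card_coe_set_eq, SetLike.coe_sort_coe]
  exact hrangecard

theorem statement18
    (p m k l : ℕ) (hp : p.Prime) (hodd : Odd p) (hm : 0 < m)
    (F : Type) [Field F] [Fintype F]
    (hcard : Fintype.card F = p ^ m)
    (u v : ℕ) (hu : u = Nat.gcd m k) (hv : v = Nat.gcd m l)
    (hu2 : padicValNat 2 u + 1 < padicValNat 2 m)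
    (hv2 : padicValNat 2 v + 1 < padicValNat 2 m) :
    ({ab : F × F | ab ≠ (0, 0) ∧
        ((¬ ∃ x : F, x ^ (p ^ (2 * k)) + x = -(ab.1 ^ (p ^ k))) ∨
         (¬ ∃ y : F, y ^ (p ^ (2 * l)) + y = -(ab.2 ^ (p ^ l))))}.ncard : ℤ)
      = (p : ℤ) ^ (2 * m) - (p : ℤ) ^ (2 * (m - u - v)) := by
  subst hu hv
  obtain ⟨hAle, hAcard⟩ := count_coord p m k hp hodd hm F hcard hu2
  obtain ⟨hBle, hBcard⟩ := count_coord p m l hp hodd hm F hcard hv2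
  set A := {a : F | ∃ x : F, x ^ p ^ (2 * k) + x = -(a ^ p ^ k)} with hA
  set B := {a : F | ∃ y : F, y ^ p ^ (2 * l) + y = -(a ^ p ^ l)} with hB
  have hpk0 : p ^ k ≠ 0 := pow_ne_zero _ hp.pos.ne'
  have hpl0 : p ^ l ≠ 0 := pow_ne_zero _ hp.pos.ne'
  have h0A : (0 : F) ∈ A := ⟨0, by simp [zero_pow hpk0, zero_pow (pow_ne_zero (2*k) hp.pos.ne')]⟩
  have h0B : (0 : F) ∈ B := ⟨0, by simp [zero_pow hpl0, zero_pow (pow_ne_zero (2*l) hp.pos.ne')]⟩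
  have hstep : {ab : F × F | ab ≠ (0, 0) ∧
        ((¬ ∃ x : F, x ^ (p ^ (2 * k)) + x = -(ab.1 ^ (p ^ k))) ∨
         (¬ ∃ y : F, y ^ (p ^ (2 * l)) + y = -(ab.2 ^ (p ^ l))))} = (A ×ˢ B)ᶜ := by
    ext ⟨a, b⟩
    simp only [Set.mem_setOf_eq, Set.mem_compl_iff, Set.mem_prod, hA, hB, ne_eq, Prod.mk.injEq,
      not_and_or]
    constructor
    · rintro ⟨hne, h⟩
      tauto
    · intro h
      constructor
      · by_contra hcon
        push_neg at hcon
        obtain ⟨rfl, rfl⟩ := hcon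
        rcases h with h | h
        · exact h h0A
        · exact h h0B
      · tauto
  rw [hstep]
  have hprodnat : (A ×ˢ B).ncard = p ^ (m - 2 * Nat.gcd m k) * p ^ (m - 2 * Nat.gcd m l) := by
    rw [← hAcard, ← hBcard, ← Nat.card_coe_set_eq, ← Nat.card_coe_set_eq,
      ← Nat.card_coe_set_eq, Nat.card_congr (Equiv.Set.prod A B), Nat.card_prod]
  have hsum : ((A ×ˢ B).ncard : ℤ) + ((A ×ˢ B)ᶜ.ncard : ℤ) = (p : ℤ) ^ (2 * m) := by
    have h1 := Set.ncard_add_ncard_compl (A ×ˢ B)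
    have h2 : Nat.card (F × F) = p ^ (2 * m) := by
      rw [Nat.card_prod, Nat.card_eq_fintype_card, hcard, ← pow_add, two_mul]
    rw [h2] at h1
    exact_mod_cast congrArg (Nat.cast : ℕ → ℤ) h1
  have hprodval : ((A ×ˢ B).ncard : ℤ) = (p : ℤ) ^ (2 * (m - Nat.gcd m k - Nat.gcd m l)) := by
    rw [hprodnat]
    push_cast [← pow_add]
    congr 1
    omega
  linarith
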